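/- Let A be an abelian category with enough injectives and (𝒯, ℱ) a torsion pair on A. Then for every object 𝕏 = [X⁻¹ → X⁰] of the tilted category B there exists a semi-injective object 𝕀 = [I → I⁰] of B (i.e., with I injective in A) and a strict morphism 𝕏 → 𝕀 which is an isomorphism in B. Dually, if A has enough projectives, every object of B admits a strict isomorphism ℙ → 𝕏 from a semi-projective object ℙ = [P⁻¹ → P] with P projective. Concretely: given a monomorphism X⁻¹ ↪ I with I injective, 𝕀 = [I → X⁰ ⊔_{X⁻¹} I] (pushout) works; given an epimorphism P ↠ X⁰ with P projective, ℙ = [P ×_{X⁰} X⁻¹ → P] (pullback) works. -/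

import Mathlib

open CategoryTheory CategoryTheory.Limits

universe v u

/-- A torsion pair (torsion theory) on an abelian category. -/
structure TorsionPair (A : Type u) [Category.{v} A] [Abelian A] where
  /-- the torsion class -/
  T : A → Prop
  /-- the torsion-free class -/
  F : A → Prop
  T_iso : ∀ {X Y : A}, (X ≅ Y) → T X → T Y
  F_iso : ∀ {X Y : A}, (X ≅ Y) → F X → F Y
  hom_zero : ∀ {X Y : A}, T X → F Y → ∀ f : X ⟶ Y, f = 0
  exists_ses : ∀ X : A, ∃ (t f : A) (i : t ⟶ X) (p : X ⟶ f) (w : i ≫ p = 0),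
    T t ∧ F f ∧ (ShortComplex.mk i p w).ShortExact

set_option linter.unusedSectionVars false

variable {A : Type u} [Category.{v} A] [Abelian A]

section PushoutAux
variable {Xm X0 I : A} (d : Xm ⟶ X0) (u : Xm ⟶ I) [Mono u]

lemma aux_po_ker :
    IsIso (kernel.lift (pushout.inr d u) (kernel.ι d ≫ u)
      (by rw [Category.assoc, ← pushout.condition, ← Category.assoc,
          kernel.condition, zero_comp])) := by
  set φ := kernel.lift (pushout.inr d u) (kernel.ι d ≫ u)
      (by rw [Category.assoc, ← pushout.condition, ← Category.assoc,
          kernel.condition, zero_comp]) with hφ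
  have hφι : φ ≫ kernel.ι (pushout.inr d u) = kernel.ι d ≫ u := kernel.lift_ι _ _ _
  have hmono : Mono φ := by
    have : Mono (φ ≫ kernel.ι (pushout.inr d u)) := by
      rw [hφι]; exact mono_comp _ _
    exact mono_of_mono φ (kernel.ι (pushout.inr d u))
  -- epi part
  have hmonolift : Mono (biprod.lift d (-u)) := by
    have h : biprod.lift d (-u) ≫ (-biprod.snd) = u := by simp
    have : Mono (biprod.lift d (-u) ≫ (-biprod.snd)) := by rw [h]; infer_instance
    exact mono_of_mono (biprod.lift d (-u)) (-biprod.snd)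
  have hcol := Abelian.BiproductToPushoutIsCokernel.isColimitBiproductToPushout d u
  have hk := Abelian.monoIsKernelOfCokernel _ hcol
  have hm : biprod.lift (0 : kernel (pushout.inr d u) ⟶ X0) (kernel.ι (pushout.inr d u)) ≫
      biprod.desc (pushout.inl d u) (pushout.inr d u) = 0 := by
    simp [kernel.condition]
  obtain ⟨t, ht⟩ := KernelFork.IsLimit.lift' hk _ hm
  simp only [Fork.ι_ofι] at ht
  have htd : t ≫ d = 0 := by
    have := congrArg (· ≫ biprod.fst) ht
    simpa using this
  have htu : t ≫ (-u) = kernel.ι (pushout.inr d u) := by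
    have := congrArg (· ≫ biprod.snd) ht
    simpa using this
  have hepi : Epi φ := by
    have : IsSplitEpi φ := IsSplitEpi.mk' ⟨-kernel.lift d t htd, by
      rw [← cancel_mono (kernel.ι (pushout.inr d u))]
      have h1 : (-kernel.lift d t htd) ≫ kernel.ι d = -t := by simp
      simp only [Category.assoc, hφι, Category.id_comp]
      rw [← Category.assoc, h1, ← htu]
      simp⟩
    exact IsSplitEpi.epi φ
  exact isIso_of_mono_of_epi φ

lemma aux_po_coker :
    IsIso (cokernel.desc d (pushout.inl d u ≫ cokernel.π (pushout.inr d u))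
      (by rw [← Category.assoc, pushout.condition, Category.assoc,
          cokernel.condition, comp_zero])) := by
  set ψ := cokernel.desc d (pushout.inl d u ≫ cokernel.π (pushout.inr d u))
      (by rw [← Category.assoc, pushout.condition, Category.assoc,
          cokernel.condition, comp_zero]) with hψ
  have hπψ : cokernel.π d ≫ ψ = pushout.inl d u ≫ cokernel.π (pushout.inr d u) :=
    cokernel.π_desc _ _ _
  have hepi0 : Epi (pushout.inl d u ≫ cokernel.π (pushout.inr d u)) := by
    refine Preadditive.epi_of_cancel_zero _ (fun {R} e he => ?_)
    rw [Category.assoc] at he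
    have h2 : pushout.inr d u ≫ cokernel.π (pushout.inr d u) ≫ e = 0 := by
      rw [← Category.assoc, cokernel.condition, zero_comp]
    have : cokernel.π (pushout.inr d u) ≫ e = 0 := by
      apply pushout.hom_ext <;> simp [he, h2]
    exact (cancel_epi (cokernel.π (pushout.inr d u))).1 (by simpa using this)
  have hepi : Epi ψ := by
    have : Epi (cokernel.π d ≫ ψ) := by rw [hπψ]; exact hepi0
    exact epi_of_epi (cokernel.π d) ψ
  have hmono : Mono ψ := by
    have h1 : d ≫ cokernel.π d = u ≫ (0 : I ⟶ cokernel d) := by simp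
    have h2 : pushout.inr d u ≫ pushout.desc (cokernel.π d) 0 h1 = 0 := pushout.inr_desc _ _ _
    have : IsSplitMono ψ := IsSplitMono.mk' ⟨cokernel.desc (pushout.inr d u)
        (pushout.desc (cokernel.π d) 0 h1) h2, by
      rw [← cancel_epi (cokernel.π d), ← Category.assoc, hπψ]
      simp
      exact pushout.inl_desc _ _ _⟩
    exact IsSplitMono.mono ψ
  exact isIso_of_mono_of_epi ψ

lemma aux_po_ses :
    ∃ w : biprod.lift d (-u) ≫ biprod.desc (pushout.inl d u) (pushout.inr d u) = 0,
      (ShortComplex.mk _ _ w).ShortExact := by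
  have w : biprod.lift d (-u) ≫ biprod.desc (pushout.inl d u) (pushout.inr d u) = 0 := by
    simp [pushout.condition]
  refine ⟨w, ?_⟩
  have hcol := Abelian.BiproductToPushoutIsCokernel.isColimitBiproductToPushout d u
  have hmonolift : Mono (biprod.lift d (-u)) := by
    have h : biprod.lift d (-u) ≫ (-biprod.snd) = u := by simp
    have : Mono (biprod.lift d (-u) ≫ (-biprod.snd)) := by rw [h]; infer_instance
    exact mono_of_mono (biprod.lift d (-u)) (-biprod.snd)
  exact ShortComplex.ShortExact.mk'
    ((ShortComplex.mk _ _ w).exact_of_g_is_cokernel hcol)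
    hmonolift (epi_of_isColimit_cofork hcol)

lemma aux_po_ker_iso : Nonempty (kernel d ≅ kernel (pushout.inr d u)) :=
  ⟨@asIso _ _ _ _ _ (aux_po_ker d u)⟩

lemma aux_po_coker_iso : Nonempty (cokernel d ≅ cokernel (pushout.inr d u)) :=
  ⟨@asIso _ _ _ _ _ (aux_po_coker d u)⟩

end PushoutAux

section PullbackAux
variable {Xm X0 P : A} (d : Xm ⟶ X0) (p : P ⟶ X0) [Epi p]

lemma aux_pb_ker :
    IsIso (kernel.lift d (kernel.ι (pullback.fst p d) ≫ pullback.snd p d)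
      (by rw [Category.assoc, ← pullback.condition, ← Category.assoc,
          kernel.condition, zero_comp])) := by
  set κ := kernel.lift d (kernel.ι (pullback.fst p d) ≫ pullback.snd p d)
      (by rw [Category.assoc, ← pullback.condition, ← Category.assoc,
          kernel.condition, zero_comp]) with hκ
  have hκι : κ ≫ kernel.ι d = kernel.ι (pullback.fst p d) ≫ pullback.snd p d :=
    kernel.lift_ι _ _ _
  have hlim := Abelian.PullbackToBiproductIsKernel.isLimitPullbackToBiproduct p d
  have hmonolift : Mono (biprod.lift (pullback.fst p d) (pullback.snd p d)) :=
    mono_of_isLimit_fork hlim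
  have hmono : Mono κ := by
    refine Preadditive.mono_of_cancel_zero _ (fun {W} t ht => ?_)
    have h1 : (t ≫ kernel.ι (pullback.fst p d)) ≫
        biprod.lift (pullback.fst p d) (pullback.snd p d) = 0 := by
      apply biprod.hom_ext
      · simp [kernel.condition]
      · have := congrArg (· ≫ kernel.ι d) ht
        simp only [Category.assoc, hκι, zero_comp] at this
        simpa using this
    have h2 : t ≫ kernel.ι (pullback.fst p d) = 0 :=
      (cancel_mono (biprod.lift (pullback.fst p d) (pullback.snd p d))).1 (by simpa using h1)
    exact (cancel_mono (kernel.ι (pullback.fst p d))).1 (by simpa using h2)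
  have h0 : (0 : kernel d ⟶ P) ≫ p = kernel.ι d ≫ d := by simp
  have h1 : pullback.lift 0 (kernel.ι d) h0 ≫ pullback.fst p d = 0 := pullback.lift_fst _ _ _
  have hepi : Epi κ := by
    have : IsSplitEpi κ := IsSplitEpi.mk' ⟨kernel.lift (pullback.fst p d)
        (pullback.lift 0 (kernel.ι d) h0) h1, by
      rw [← cancel_mono (kernel.ι d)]
      simp [hκι]
      exact pullback.lift_snd _ _ _⟩
    exact IsSplitEpi.epi κ
  exact isIso_of_mono_of_epi κ

lemma aux_pb_coker :
    IsIso (cokernel.desc (pullback.fst p d) (p ≫ cokernel.π d)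
      (by rw [← Category.assoc, pullback.condition, Category.assoc,
          cokernel.condition, comp_zero])) := by
  set χ := cokernel.desc (pullback.fst p d) (p ≫ cokernel.π d)
      (by rw [← Category.assoc, pullback.condition, Category.assoc,
          cokernel.condition, comp_zero]) with hχ
  have hπχ : cokernel.π (pullback.fst p d) ≫ χ = p ≫ cokernel.π d := cokernel.π_desc _ _ _
  have hepi : Epi χ := by
    have : Epi (cokernel.π (pullback.fst p d) ≫ χ) := by
      rw [hπχ]; exact epi_comp _ _
    exact epi_of_epi (cokernel.π (pullback.fst p d)) χ
  have hlim := Abelian.PullbackToBiproductIsKernel.isLimitPullbackToBiproduct p d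
  have hepidesc : Epi (biprod.desc p (-d)) := by
    have h : biprod.inl ≫ biprod.desc p (-d) = p := biprod.inl_desc _ _
    have : Epi (biprod.inl ≫ biprod.desc p (-d)) := by rw [h]; infer_instance
    exact epi_of_epi biprod.inl (biprod.desc p (-d))
  have hcok := Abelian.epiIsCokernelOfKernel _ hlim
  have hm2 : biprod.lift (pullback.fst p d) (pullback.snd p d) ≫
      biprod.desc (cokernel.π (pullback.fst p d)) 0 = 0 := by
    simp [cokernel.condition]
  obtain ⟨e, he⟩ := CokernelCofork.IsColimit.desc' hcok _ hm2
  simp only [Cofork.π_ofπ] at he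
  have hp : p ≫ e = cokernel.π (pullback.fst p d) := by
    have := congrArg (biprod.inl ≫ ·) he
    simpa using this
  have hd : d ≫ e = 0 := by
    have := congrArg (biprod.inr ≫ ·) he
    simp only [biprod.inr_desc_assoc, biprod.inr_desc] at this
    simpa using this
  have hmono : Mono χ := by
    have : IsSplitMono χ := IsSplitMono.mk' ⟨cokernel.desc d e hd, by
      rw [← cancel_epi (cokernel.π (pullback.fst p d)), ← Category.assoc, hπχ]
      simp [hp]⟩
    exact IsSplitMono.mono χ
  exact isIso_of_mono_of_epi χ

lemma aux_pb_ses :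
    ∃ w : biprod.lift (pullback.fst p d) (-(pullback.snd p d)) ≫ biprod.desc p d = 0,
      (ShortComplex.mk _ _ w).ShortExact := by
  have w : biprod.lift (pullback.fst p d) (-(pullback.snd p d)) ≫ biprod.desc p d = 0 := by
    simp [pullback.condition]
  refine ⟨w, ?_⟩
  have hlim := Abelian.PullbackToBiproductIsKernel.isLimitPullbackToBiproduct p d
  have w1 : biprod.lift (pullback.fst p d) (pullback.snd p d) ≫ biprod.desc p (-d) = 0 := by
    simp [pullback.condition]
  have hepidesc : Epi (biprod.desc p (-d)) := by
    have h : biprod.inl ≫ biprod.desc p (-d) = p := biprod.inl_desc _ _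
    have : Epi (biprod.inl ≫ biprod.desc p (-d)) := by rw [h]; infer_instance
    exact epi_of_epi biprod.inl (biprod.desc p (-d))
  have hS₁ : (ShortComplex.mk _ _ w1).ShortExact :=
    ShortComplex.ShortExact.mk'
      ((ShortComplex.mk _ _ w1).exact_of_f_is_kernel hlim)
      (mono_of_isLimit_fork hlim) hepidesc
  refine ShortComplex.shortExact_of_iso ?_ hS₁
  refine ShortComplex.isoMk (Iso.refl _)
    (⟨biprod.map (𝟙 P) (-𝟙 Xm), biprod.map (𝟙 P) (-𝟙 Xm), by aesop_cat, by aesop_cat⟩)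
    (Iso.refl _) ?_ ?_
  · dsimp
    apply biprod.hom_ext <;> simp
  · dsimp
    apply biprod.hom_ext' <;> simp

lemma aux_pb_ker_iso : Nonempty (kernel (pullback.fst p d) ≅ kernel d) :=
  ⟨@asIso _ _ _ _ _ (aux_pb_ker d p)⟩

lemma aux_pb_coker_iso : Nonempty (cokernel (pullback.fst p d) ≅ cokernel d) :=
  ⟨@asIso _ _ _ _ _ (aux_pb_coker d p)⟩

end PullbackAux

/-- Semi-injective and semi-projective resolutions of objects of the tilted
category `B`. If `A` has enough injectives, every object `[X⁻¹ → X⁰]` of `B` admits a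
strict morphism to a semi-injective object which is an isomorphism in `B`; dually with
enough projectives. Concretely, the pushout along a monomorphism `X⁻¹ ↪ I` into an
injective (resp. the pullback along an epimorphism `P ↠ X⁰ `from a projective) works;
here being an isomorphism in `B` is expressed by the exactness of the NW–SE sequence
`0 → X⁻¹ → X⁰ ⊕ Y⁻¹ → Y⁰ → 0` of the strict morphism. -/
theorem semiInjective_semiProjective_resolutions
    {A : Type u} [Category.{v} A] [Abelian A] (tp : TorsionPair A)
    {Xm X0 : A} (d : Xm ⟶ X0) (hker : tp.F (kernel d)) (hcoker : tp.T (cokernel d)) :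
    -- concretely: the pushout construction
    (∀ (I : A) (u : Xm ⟶ I), Mono u → Injective I →
      tp.F (kernel (pushout.inr d u)) ∧ tp.T (cokernel (pushout.inr d u)) ∧
      d ≫ pushout.inl d u = u ≫ pushout.inr d u ∧
      ∃ w : biprod.lift d (-u) ≫ biprod.desc (pushout.inl d u) (pushout.inr d u) = 0,
        (ShortComplex.mk _ _ w).ShortExact) ∧
    -- concretely: the pullback construction
    (∀ (P : A) (p : P ⟶ X0), Epi p → Projective P →
      tp.F (kernel (pullback.fst p d)) ∧ tp.T (cokernel (pullback.fst p d)) ∧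
      pullback.snd p d ≫ d = pullback.fst p d ≫ p ∧
      ∃ w : biprod.lift (pullback.fst p d) (-(pullback.snd p d)) ≫ biprod.desc p d = 0,
        (ShortComplex.mk _ _ w).ShortExact) ∧
    -- existence of a semi-injective resolution
    (EnoughInjectives A →
      ∃ (I P' : A) (u : Xm ⟶ I) (dI : I ⟶ P') (g0 : X0 ⟶ P'),
        Injective I ∧ tp.F (kernel dI) ∧ tp.T (cokernel dI) ∧
        d ≫ g0 = u ≫ dI ∧
        ∃ w : biprod.lift d (-u) ≫ biprod.desc g0 dI = 0,
          (ShortComplex.mk _ _ w).ShortExact) ∧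
    -- existence of a semi-projective resolution
    (EnoughProjectives A →
      ∃ (P Qm : A) (dP : Qm ⟶ P) (p : P ⟶ X0) (gm : Qm ⟶ Xm),
        Projective P ∧ tp.F (kernel dP) ∧ tp.T (cokernel dP) ∧
        dP ≫ p = gm ≫ d ∧
        ∃ w : biprod.lift dP (-gm) ≫ biprod.desc p d = 0,
          (ShortComplex.mk _ _ w).ShortExact) := by
  have po : ∀ (I : A) (u : Xm ⟶ I), Mono u → Injective I →
      tp.F (kernel (pushout.inr d u)) ∧ tp.T (cokernel (pushout.inr d u)) ∧
      d ≫ pushout.inl d u = u ≫ pushout.inr d u ∧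
      ∃ w : biprod.lift d (-u) ≫ biprod.desc (pushout.inl d u) (pushout.inr d u) = 0,
        (ShortComplex.mk _ _ w).ShortExact := by
    intro I u hu _
    haveI := hu
    obtain ⟨e1⟩ := aux_po_ker_iso d u
    obtain ⟨e2⟩ := aux_po_coker_iso d u
    exact ⟨tp.F_iso e1 hker, tp.T_iso e2 hcoker, pushout.condition, aux_po_ses d u⟩
  have pb : ∀ (P : A) (p : P ⟶ X0), Epi p → Projective P →
      tp.F (kernel (pullback.fst p d)) ∧ tp.T (cokernel (pullback.fst p d)) ∧
      pullback.snd p d ≫ d = pullback.fst p d ≫ p ∧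
      ∃ w : biprod.lift (pullback.fst p d) (-(pullback.snd p d)) ≫ biprod.desc p d = 0,
        (ShortComplex.mk _ _ w).ShortExact := by
    intro P p hp _
    haveI := hp
    obtain ⟨e1⟩ := aux_pb_ker_iso d p
    obtain ⟨e2⟩ := aux_pb_coker_iso d p
    exact ⟨tp.F_iso e1.symm hker, tp.T_iso e2.symm hcoker,
      pullback.condition.symm, aux_pb_ses d p⟩
  refine ⟨po, pb, ?_, ?_⟩
  · intro hEI
    haveI := hEI
    obtain ⟨h1, h2, h3, h4⟩ := po (Injective.under Xm) (Injective.ι Xm)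
      inferInstance inferInstance
    exact ⟨Injective.under Xm, pushout d (Injective.ι Xm), Injective.ι Xm,
      pushout.inr _ _, pushout.inl _ _, inferInstance, h1, h2, h3, h4⟩
  · intro hEP
    haveI := hEP
    obtain ⟨h1, h2, h3, h4⟩ := pb (Projective.over X0) (Projective.π X0)
      inferInstance inferInstance
    exact ⟨Projective.over X0, pullback (Projective.π X0) d, pullback.fst _ _,
      Projective.π X0, pullback.snd _ _, inferInstance, h1, h2,
      pullback.condition, h4⟩
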